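/- If the reweighting function R is unbiased (E_E[R_E(P)] = P for all distributions P) and watermark codes E_1,...,E_n are i.i.d. with distribution P_E, then the expected watermarked sequence probability equals the unwatermarked probability: E_{E_1,...,E_n}[∏_{i=1}^n R_{E_i}(P_M(·|a, x_{1:i-1}))(x_i)] = ∏_{i=1}^n P_M(x_i | a, x_{1:i-1}). -/

import Mathlib

open MeasureTheory

/-- If the reweighting function `R` is unbiased and watermark codes `E 1, …, E n` are i.i.d.
(modeled by the product measure `Measure.pi (fun _ => PE)`), then the expected watermarked
sequence probability equals the unwatermarked sequence probability. -/
theorem iid_codes_unbiased_sequence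
    {S : Type*} [Fintype S] {ℰ : Type*} [MeasurableSpace ℰ]
    (PE : Measure ℰ) [IsProbabilityMeasure PE]
    (R : ℰ → (S → ℝ) → (S → ℝ))
    (hRmeas : ∀ (P : S → ℝ) (y : S), Measurable fun e => R e P y)
    (hRdist : ∀ (e : ℰ) (P : S → ℝ), (∀ y, 0 ≤ P y) → ∑ y, P y = 1 →
      (∀ y, 0 ≤ R e P y) ∧ ∑ y, R e P y = 1)
    (hunbiased : ∀ (P : S → ℝ), (∀ y, 0 ≤ P y) → ∑ y, P y = 1 →
      ∀ y : S, ∫ e, R e P y ∂PE = P y)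
    (PM : List S → S → ℝ)
    (hPM : ∀ ctx, (∀ y, 0 ≤ PM ctx y) ∧ ∑ y, PM ctx y = 1)
    (a : List S) (n : ℕ) (x : Fin n → S) :
    ∫ e : Fin n → ℰ,
        (∏ i : Fin n,
          R (e i) (PM (a ++ List.ofFn fun j : Fin i.val => x (Fin.castLE i.isLt.le j))) (x i))
        ∂(Measure.pi fun _ : Fin n => PE)
      = ∏ i : Fin n,
          PM (a ++ List.ofFn fun j : Fin i.val => x (Fin.castLE i.isLt.le j)) (x i) := by
  letI : MeasureSpace ℰ := ⟨PE⟩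
  have hvol : (Measure.pi fun _ : Fin n => PE) = (volume : Measure (Fin n → ℰ)) := by
    rfl
  rw [hvol]
  rw [← hvol, MeasureTheory.integral_fintype_prod_eq_prod (ι := Fin n)
    (f := fun i e => R e (PM (a ++ List.ofFn fun j : Fin i.val => x (Fin.castLE i.isLt.le j))) (x i))]
  refine Finset.prod_congr rfl fun i _ => ?_
  exact hunbiased _ (hPM _).1 (hPM _).2 _
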